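/- Let H₁, …, H_K be n×n complex Hermitian matrices, let r : {1,…,M} → {1,…,K} and x₁, …, x_M ∈ ℝ satisfy Σ_{j=1}^M x_j·H_{r(j)} = H. Define the ordered product S(t) = exp(−ix₁H_{r(1)}t)·exp(−ix₂H_{r(2)}t)⋯exp(−ix_M H_{r(M)}t) and the partial products P_j(t) = exp(−ix₁H_{r(1)}t)⋯exp(−ix_{j−1}H_{r(j−1)}t) (with P₁(t) = I). Then for every t ∈ ℝ, S′(t)·S(t)* + iH = −i·Σ_{j=2}^M x_j·( P_j(t)·H_{r(j)}·P_j(t)* − H_{r(j)} ). -/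

import Mathlib

open Matrix

attribute [local instance] Matrix.linftyOpNormedAddCommGroup Matrix.linftyOpNormedRing
  Matrix.linftyOpNormedAlgebra

private lemma my_hasDerivAt_exp_smul {n : ℕ} (A : Matrix (Fin n) (Fin n) ℂ) (t : ℝ) :
    HasDerivAt (fun u : ℝ => NormedSpace.exp (u • A)) (A * NormedSpace.exp (t • A)) t := by
  have := hasDerivAt_exp_smul_const' (𝕂 := ℝ) A t
  exact this

private lemma my_unitary_list_prod {n : ℕ} (l : List (Matrix (Fin n) (Fin n) ℂ))
    (h : ∀ a ∈ l, a * aᴴ = 1) : l.prod * l.prodᴴ = 1 := by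
  induction l with
  | nil => simp
  | cons a l ih =>
    have ha := h a (List.mem_cons_self)
    have hl := ih fun b hb => h b (List.mem_cons_of_mem _ hb)
    simp only [List.prod_cons, conjTranspose_mul]
    rw [mul_assoc, ← mul_assoc l.prod, hl, one_mul, ha]

private lemma my_hasDerivAt_finRange_prod {n M : ℕ} (f : Fin M → ℝ → Matrix (Fin n) (Fin n) ℂ)
    (f' : Fin M → Matrix (Fin n) (Fin n) ℂ)
    (t : ℝ) (h : ∀ j, HasDerivAt (f j) (f' j) t) :
    HasDerivAt (fun u => ((List.finRange M).map fun j => f j u).prod)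
      (∑ j : Fin M, (((List.finRange M).take (j : ℕ)).map fun i => f i t).prod * f' j *
        (((List.finRange M).drop ((j : ℕ)+1)).map fun i => f i t).prod) t := by
  have H := HasFDerivAt.list_prod' (𝕜 := ℝ) (l := List.finRange M)
    (f := fun j u => f j u) (f' := fun j => (1 : ℝ →L[ℝ] ℝ).smulRight (f' j)) (x := t)
    (fun i _ => (h i).hasFDerivAt)
  rw [hasDerivAt_iff_hasFDerivAt]
  refine H.congr_fderiv ?_
  have hlen : M = (List.finRange M).length := (List.length_finRange).symm
  rw [← Fin.sum_congr' _ hlen]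
  ext u
  simp [List.getElem_finRange, Finset.smul_sum, smul_mul_assoc, mul_smul_comm, mul_assoc,
    smul_smul, ContinuousLinearMap.toSpanSingleton_apply]
  erw [ContinuousLinearMap.toSpanSingleton_apply, one_smul]

theorem trotter_generator_local_sum
    (n K M : ℕ) (H : Fin K → Matrix (Fin n) (Fin n) ℂ) (hH : ∀ k, (H k).IsHermitian)
    (r : Fin M → Fin K) (x : Fin M → ℝ)
    (Hsum : Matrix (Fin n) (Fin n) ℂ)
    (hsum : ∑ j : Fin M, (x j : ℂ) • H (r j) = Hsum)
    (E : Fin M → ℝ → Matrix (Fin n) (Fin n) ℂ)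
    (hE : ∀ j t, E j t = NormedSpace.exp ((-Complex.I * (x j : ℂ) * (t : ℂ)) • H (r j)))
    (S : ℝ → Matrix (Fin n) (Fin n) ℂ)
    (hS : ∀ t, S t = ((List.finRange M).map fun j => E j t).prod)
    (P : Fin M → ℝ → Matrix (Fin n) (Fin n) ℂ)
    (hP : ∀ j t, P j t = (((List.finRange M).take (j : ℕ)).map fun j' => E j' t).prod)
    (t : ℝ) :
    deriv S t * (S t)ᴴ + Complex.I • Hsum =
      (-Complex.I) • ∑ j ∈ Finset.univ.filter (fun j : Fin M => 1 ≤ (j : ℕ)),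
        (x j : ℂ) • (P j t * H (r j) * (P j t)ᴴ - H (r j)) := by
  classical
  set A : Fin M → Matrix (Fin n) (Fin n) ℂ :=
    fun j => (-Complex.I * (x j : ℂ)) • H (r j) with hA
  -- E in exponential-of-scaled-generator form
  have hE' : ∀ j (u : ℝ), E j u = NormedSpace.exp (u • A j) := by
    intro j u
    rw [hE]
    congr 1
    ext a b
    simp [hA, Matrix.smul_apply, Complex.real_smul]
    ring
  -- derivative of each factor
  have hDeriv : ∀ j, HasDerivAt (E j) (A j * E j t) t := by
    intro j
    have heq : E j = fun u : ℝ => NormedSpace.exp (u • A j) := funext fun u => hE' j u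
    have h2 := my_hasDerivAt_exp_smul (A j) t
    rw [← hE' j t] at h2
    rw [← heq] at h2
    exact h2
  -- unitarity of each factor
  have hUnit : ∀ j (u : ℝ), E j u * (E j u)ᴴ = 1 := by
    intro j u
    have hherm : ((u : ℝ) • A j)ᴴ = -(u • A j) := by
      rw [hA, conjTranspose_smul, conjTranspose_smul, (hH (r j)).eq]
      rw [← neg_smul, ← smul_assoc, ← smul_assoc]
      congr 1
      simp [Complex.ext_iff, mul_comm]
    rw [hE' j u, ← Matrix.exp_conjTranspose, hherm, ← Matrix.exp_add_of_commute]
    · simp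
    · exact (Commute.refl _).neg_right
  -- suffix products and their unitarity
  set R : Fin M → Matrix (Fin n) (Fin n) ℂ :=
    fun j => (((List.finRange M).drop (j : ℕ)).map fun i => E i t).prod with hRdef
  set Q : Fin M → Matrix (Fin n) (Fin n) ℂ :=
    fun j => (((List.finRange M).drop ((j : ℕ) + 1)).map fun i => E i t).prod with hQdef
  have hRunit : ∀ j, R j * (R j)ᴴ = 1 := by
    intro j
    apply my_unitary_list_prod
    intro a ha
    obtain ⟨i, _, rfl⟩ := List.mem_map.1 ha
    exact hUnit i t
  -- drop j = j :: drop (j+1), so R j = E j t * Q j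
  have hdropcons : ∀ j : Fin M,
      (List.finRange M).drop (j : ℕ) = j :: (List.finRange M).drop ((j : ℕ) + 1) := by
    intro j
    have hj : (j : ℕ) < (List.finRange M).length := by simp [j.isLt]
    rw [List.drop_eq_getElem_cons hj]
    simp
  have hRQ : ∀ j, R j = E j t * Q j := by
    intro j
    show (((List.finRange M).drop (j : ℕ)).map fun i => E i t).prod = _
    rw [hdropcons j, List.map_cons, List.prod_cons]
  -- S t = P j t * R j
  have hSplit : ∀ j : Fin M, S t = P j t * R j := by
    intro j
    show S t = P j t * (((List.finRange M).drop (j : ℕ)).map fun i => E i t).prod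
    rw [hS, hP, ← List.prod_append, ← List.map_append, List.take_append_drop]
  -- derivative of S
  have hDS : deriv S t = ∑ j : Fin M, P j t * A j * R j := by
    have h0 : S = fun u => ((List.finRange M).map fun j => E j u).prod := funext hS
    rw [h0]
    erw [(my_hasDerivAt_finRange_prod E (fun j => A j * E j t) t hDeriv).deriv]
    refine Finset.sum_congr rfl fun j _ => ?_
    rw [← hP, hRQ j]
    show P j t * (A j * E j t) * Q j = _
    simp [mul_assoc]
  -- main computation of LHS
  have hLHS : deriv S t * (S t)ᴴ =
      ∑ j : Fin M, (-Complex.I * (x j : ℂ)) • (P j t * H (r j) * (P j t)ᴴ) := by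
    rw [hDS, Finset.sum_mul]
    refine Finset.sum_congr rfl fun j _ => ?_
    rw [hSplit j, conjTranspose_mul]
    calc P j t * A j * R j * ((R j)ᴴ * (P j t)ᴴ)
        = P j t * A j * (R j * (R j)ᴴ) * (P j t)ᴴ := by
          simp only [mul_assoc]
      _ = P j t * A j * (P j t)ᴴ := by rw [hRunit, mul_one]
      _ = (-Complex.I * (x j : ℂ)) • (P j t * H (r j) * (P j t)ᴴ) := by
          rw [hA]
          simp [mul_smul_comm, smul_mul_assoc]
  -- reduce RHS filter-sum to full sum
  have hfilter :
      ∑ j ∈ Finset.univ.filter (fun j : Fin M => 1 ≤ (j : ℕ)),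
          (x j : ℂ) • (P j t * H (r j) * (P j t)ᴴ - H (r j))
        = ∑ j : Fin M, (x j : ℂ) • (P j t * H (r j) * (P j t)ᴴ - H (r j)) := by
    refine Finset.sum_subset (Finset.filter_subset _ _) ?_
    intro j _ hj
    simp only [Finset.mem_filter, Finset.mem_univ, true_and, not_le, Nat.lt_one_iff] at hj
    have hP1 : P j t = 1 := by rw [hP, hj]; simp
    rw [hP1]
    simp
  rw [hLHS, hfilter, ← hsum, Finset.smul_sum, Finset.smul_sum, ← Finset.sum_add_distrib]
  refine Finset.sum_congr rfl fun j _ => ?_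
  ext a b
  simp [Matrix.smul_apply, Matrix.sub_apply, Matrix.add_apply, smul_eq_mul]
  ring
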